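/- GME of a star network with one isotropic edge: let n ≥ 3, d ≥ 2, and p ∈ [0,1] with p > 1/(d+1). Consider the n-partite state ρ_p ⊗ (φ_d^+)^{⊗(n−2)}, where Alice holds one subsystem of every tensor factor, Bob₁ holds the other subsystem of the d-dimensional isotropic state ρ_p, and each Bob_i for 2 ≤ i ≤ n−1 holds the other subsystem of one copy of the maximally entangled state φ_d^+. This state is genuinely multipartite entangled. -/

import Mathlib

open Matrix Finset
open scoped ComplexOrder

attribute [local instance] Classical.propDecidable

noncomputable section

/-- The rank-one matrix `|v⟩⟨v|` associated to a vector `v`. -/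
def vecProj {D : Type*} [Fintype D] (v : D → ℂ) : Matrix D D ℂ :=
  Matrix.of fun i j => v i * star (v j)

/-- `v` is a unit vector. -/
def UnitVec {D : Type*} [Fintype D] (v : D → ℂ) : Prop :=
  ∑ i, star (v i) * v i = 1

/-- A quantum state: positive semidefinite matrix of trace one. -/
def IsState {D : Type*} [Fintype D] [DecidableEq D] (ρ : Matrix D D ℂ) : Prop :=
  ρ.PosSemidef ∧ ρ.trace = 1

/-- A vector on a multipartite system is fully product if it is a tensor product of
single-party vectors. -/
def IsProdVec {ι : Type*} [Fintype ι] {Idx : ι → Type*} (v : (∀ i, Idx i) → ℂ) : Prop :=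
  ∃ ψ : ∀ i, Idx i → ℂ, ∀ f, v f = ∏ i, ψ i (f i)

/-- A vector on a multipartite system is biseparable if it is a product across some
bipartition of the parties into a nonempty proper subset `M` and its complement. -/
def IsBisepVec {ι : Type*} [Fintype ι] {Idx : ι → Type*} (v : (∀ i, Idx i) → ℂ) : Prop :=
  ∃ M : Finset ι, M.Nonempty ∧ M ≠ Finset.univ ∧
    ∃ (a : ((j : {j : ι // j ∈ M}) → Idx j.1) → ℂ)
      (b : ((j : {j : ι // j ∉ M}) → Idx j.1) → ℂ),
      ∀ f, v f = a (fun j => f j.1) * b (fun j => f j.1)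

/-- Fully separable states: finite convex combinations of fully product pure states. -/
def FullySepState {ι : Type*} [Fintype ι] [DecidableEq ι] (Idx : ι → Type*)
    [∀ i, Fintype (Idx i)] (ρ : Matrix (∀ i, Idx i) (∀ i, Idx i) ℂ) : Prop :=
  ∃ (m : ℕ) (w : Fin m → ℝ) (u : Fin m → (∀ i, Idx i) → ℂ),
    (∀ k, 0 ≤ w k) ∧ (∑ k, w k = 1) ∧
    (∀ k, UnitVec (u k) ∧ IsProdVec (u k)) ∧
    ρ = ∑ k, (w k : ℂ) • vecProj (u k)

/-- Biseparable states: finite convex combinations of biseparable pure states. -/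
def BisepState {ι : Type*} [Fintype ι] [DecidableEq ι] (Idx : ι → Type*)
    [∀ i, Fintype (Idx i)] (ρ : Matrix (∀ i, Idx i) (∀ i, Idx i) ℂ) : Prop :=
  ∃ (m : ℕ) (w : Fin m → ℝ) (u : Fin m → (∀ i, Idx i) → ℂ),
    (∀ k, 0 ≤ w k) ∧ (∑ k, w k = 1) ∧
    (∀ k, UnitVec (u k) ∧ IsBisepVec (u k)) ∧
    ρ = ∑ k, (w k : ℂ) • vecProj (u k)

/-- The maximally entangled vector `(1/√d) ∑ᵢ |ii⟩` on `ℂ^d ⊗ ℂ^d`. -/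
def maxEntVec (d : ℕ) : Fin d × Fin d → ℂ :=
  fun q => if q.1 = q.2 then (((Real.sqrt d)⁻¹ : ℝ) : ℂ) else 0

/-- The `d`-dimensional isotropic state with visibility `p`:
`ρ_p = p·φ_d⁺ + (1-p)·𝟙/d²`. -/
def isoState (d : ℕ) (p : ℝ) : Matrix (Fin d × Fin d) (Fin d × Fin d) ℂ :=
  (p : ℂ) • vecProj (maxEntVec d) +
    ((((1 - p) / (d ^ 2 : ℝ)) : ℝ) : ℂ) •
      (1 : Matrix (Fin d × Fin d) (Fin d × Fin d) ℂ)

/-- The parties of the star network: `none` is Alice, `some i` is Bob `i`. Alice holds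
`n−1` subsystems (one for each edge), each Bob holds one. -/
def StarIdx (n d : ℕ) : Option (Fin (n - 1)) → Type
  | none => Fin (n - 1) → Fin d
  | some _ => Fin d

instance (n d : ℕ) (o : Option (Fin (n - 1))) : Fintype (StarIdx n d o) :=
  match o with
  | none => inferInstanceAs (Fintype (Fin (n - 1) → Fin d))
  | some _ => inferInstanceAs (Fintype (Fin d))

instance (n d : ℕ) (o : Option (Fin (n - 1))) : DecidableEq (StarIdx n d o) :=
  match o with
  | none => inferInstanceAs (DecidableEq (Fin (n - 1) → Fin d))
  | some _ => inferInstanceAs (DecidableEq (Fin d))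

/-- The star network state: edge `i₀` carries the isotropic state `ρ_p`, and every other
edge `i` carries the maximally entangled state `φ_d⁺`; edge `i` connects Alice's `i`-th
subsystem to Bob `i`. -/
def starNet (n d : ℕ) (p : ℝ) (i₀ : Fin (n - 1)) :
    Matrix (∀ o, StarIdx n d o) (∀ o, StarIdx n d o) ℂ :=
  Matrix.of fun f g =>
    ∏ i : Fin (n - 1),
      (if i = i₀ then isoState d p else vecProj (maxEntVec d))
        (f none i, f (some i)) (g none i, g (some i))

namespace StarGME
variable (n d : ℕ)

/-- The full product of maximally entangled vectors across all edges. -/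
def Phi : (∀ o, StarIdx n d o) → ℂ :=
  fun f => ∏ i, maxEntVec d (f none i, f (some i))

/-- Diagonal embedding: Alice's record `g` together with each Bob holding `g i`. -/
def embed (g : Fin (n - 1) → Fin d) : ∀ o, StarIdx n d o :=
  fun o => match o with
  | none => g
  | some i => g i

lemma embed_injective : Function.Injective (embed n d) := by
  intro g g' h
  exact congrFun h none

lemma phi_eq (f : ∀ o, StarIdx n d o) :
    Phi n d f = if (∀ i, f none i = f (some i)) then
      (((Real.sqrt d)⁻¹ : ℝ) : ℂ) ^ (n - 1) else 0 := by
  unfold Phi maxEntVec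
  by_cases h : ∀ i, f none i = f (some i)
  · rw [if_pos h]
    refine (Finset.prod_eq_pow_card (b := (((Real.sqrt d)⁻¹ : ℝ) : ℂ)) ?_).trans ?_
    · intro i _
      exact if_pos (h i)
    · rw [Finset.card_univ, Fintype.card_fin]
  · rw [if_neg h]
    rw [not_forall] at h
    obtain ⟨i, hi⟩ := h
    refine Finset.prod_eq_zero (Finset.mem_univ i) ?_
    rw [if_neg hi]

lemma star_phi (f : ∀ o, StarIdx n d o) : star (Phi n d f) = Phi n d f := by
  rw [phi_eq]
  split <;> simp [← Complex.ofReal_pow]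

end StarGME
namespace StarGME

lemma embed_image (n d : ℕ) :
    (Finset.univ.filter fun (f : ∀ o, StarIdx n d o) => ∀ i, f none i = f (some i))
      = Finset.univ.image (embed n d) := by
  ext f
  simp only [Finset.mem_filter, Finset.mem_univ, true_and, Finset.mem_image]
  constructor
  · intro h
    refine ⟨f none, funext fun o => ?_⟩
    cases o with
    | none => rfl
    | some i => exact h i
  · rintro ⟨g, rfl⟩
    intro i
    rfl

lemma sum_phi_mul (n d : ℕ) (h : (∀ o, StarIdx n d o) → ℂ) :
    ∑ f, Phi n d f * h f
      = (((Real.sqrt d)⁻¹ : ℝ) : ℂ) ^ (n - 1) * ∑ g : Fin (n - 1) → Fin d, h (embed n d g) := by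
  calc ∑ f, Phi n d f * h f
      = ∑ f, (if (∀ i, f none i = f (some i)) then
          (((Real.sqrt d)⁻¹ : ℝ) : ℂ) ^ (n - 1) * h f else 0) := by
        refine Finset.sum_congr rfl fun f _ => ?_
        rw [phi_eq]
        split <;> simp
    _ = ∑ f ∈ Finset.univ.filter (fun f => ∀ i, f none i = f (some i)),
          (((Real.sqrt d)⁻¹ : ℝ) : ℂ) ^ (n - 1) * h f := by
        rw [Finset.sum_filter]
    _ = ∑ g : Fin (n - 1) → Fin d,
          (((Real.sqrt d)⁻¹ : ℝ) : ℂ) ^ (n - 1) * h (embed n d g) := by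
        rw [embed_image, Finset.sum_image (fun a _ b _ hab => embed_injective n d hab)]
    _ = _ := by rw [Finset.mul_sum]

end StarGME
namespace StarGME

lemma sum_prod_pi {m d : ℕ} (F : Fin m → Fin d → ℂ) :
    ∑ y : Fin m → Fin d, ∏ i, F i (y i) = ∏ i, ∑ t, F i t := by
  rw [Finset.prod_univ_sum]
  rw [Fintype.piFinset_univ]

lemma inv_sqrt_sq (d : ℕ) (hd : 1 ≤ d) :
    ((Real.sqrt d)⁻¹ : ℝ) * (Real.sqrt d)⁻¹ = (d : ℝ)⁻¹ := by
  rw [← mul_inv]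
  rw [Real.mul_self_sqrt (by positivity)]

lemma edge_sum_max (d : ℕ) (hd : 1 ≤ d) :
    ∑ s : Fin d, ∑ t : Fin d, vecProj (maxEntVec d) (s, s) (t, t) = (d : ℂ) := by
  have h1 : ∀ s t : Fin d, vecProj (maxEntVec d) (s, s) (t, t)
      = (((d : ℝ)⁻¹ : ℝ) : ℂ) := by
    intro s t
    simp only [vecProj, Matrix.of_apply, maxEntVec, if_pos rfl, if_true,
      RCLike.star_def, Complex.conj_ofReal]
    rw [← Complex.ofReal_mul, inv_sqrt_sq d hd]
  simp only [h1, Finset.sum_const, Finset.card_univ, Fintype.card_fin, nsmul_eq_mul]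
  have hd0 : (d : ℂ) ≠ 0 := by
    exact_mod_cast Nat.cast_ne_zero.mpr (by omega)
  push_cast
  field_simp

lemma edge_sum_iso (d : ℕ) (hd : 1 ≤ d) (p : ℝ) :
    ∑ s : Fin d, ∑ t : Fin d, isoState d p (s, s) (t, t)
      = (p : ℂ) * d + ((((1 - p) / (d ^ 2 : ℝ)) : ℝ) : ℂ) * d := by
  have h1 : ∀ s t : Fin d, isoState d p (s, s) (t, t)
      = (p : ℂ) * vecProj (maxEntVec d) (s, s) (t, t)
        + ((((1 - p) / (d ^ 2 : ℝ)) : ℝ) : ℂ) * (if s = t then 1 else 0) := by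
    intro s t
    simp [isoState, Matrix.one_apply, Prod.ext_iff]
  simp only [h1, Finset.sum_add_distrib, ← Finset.mul_sum]
  rw [edge_sum_max d hd]
  congr 1
  congr 1
  simp

end StarGME
namespace StarGME

set_option maxHeartbeats 1000000 in
lemma witness_value (n d : ℕ) (hn : 3 ≤ n) (hd : 2 ≤ d) (p : ℝ) (i₀ : Fin (n - 1)) :
    ∑ f, ∑ g, star (Phi n d f) * (starNet n d p i₀ f g * Phi n d g)
      = ((p + (1 - p) / d ^ 2 : ℝ) : ℂ) := by
  have hd1 : 1 ≤ d := by omega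
  set c : ℂ := (((Real.sqrt d)⁻¹ : ℝ) : ℂ) with hc
  have main : ∑ f, ∑ g, star (Phi n d f) * (starNet n d p i₀ f g * Phi n d g)
      = c ^ (n-1) * (c ^ (n-1) * ∑ x : Fin (n-1) → Fin d, ∑ y : Fin (n-1) → Fin d,
          starNet n d p i₀ (embed n d x) (embed n d y)) := by
    calc ∑ f, ∑ g, star (Phi n d f) * (starNet n d p i₀ f g * Phi n d g)
        = ∑ f, Phi n d f * (∑ g, Phi n d g * starNet n d p i₀ f g) := by
          refine Finset.sum_congr rfl fun f _ => ?_
          rw [star_phi, Finset.mul_sum]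
          exact Finset.sum_congr rfl fun g _ => by ring
      _ = ∑ f, Phi n d f * (c ^ (n-1) * ∑ y, starNet n d p i₀ f (embed n d y)) := by
          refine Finset.sum_congr rfl fun f _ => ?_
          rw [sum_phi_mul]
      _ = c ^ (n-1) * ∑ f, Phi n d f * (∑ y, starNet n d p i₀ f (embed n d y)) := by
          rw [Finset.mul_sum]
          exact Finset.sum_congr rfl fun f _ => by ring
      _ = _ := by
          rw [sum_phi_mul n d (fun f => ∑ y, starNet n d p i₀ f (embed n d y))]
  rw [main]
  have hdouble : (∑ x : Fin (n-1) → Fin d, ∑ y : Fin (n-1) → Fin d,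
      starNet n d p i₀ (embed n d x) (embed n d y))
      = ∏ i, ∑ s, ∑ t, (if i = i₀ then isoState d p else vecProj (maxEntVec d)) (s, s) (t, t) := by
    have hSN : ∀ x y : Fin (n-1) → Fin d,
        starNet n d p i₀ (embed n d x) (embed n d y)
          = ∏ i, (if i = i₀ then isoState d p else vecProj (maxEntVec d)) (x i, x i) (y i, y i) :=
      fun x y => rfl
    simp only [hSN]
    calc (∑ x : Fin (n-1) → Fin d, ∑ y : Fin (n-1) → Fin d,
          ∏ i, (if i = i₀ then isoState d p else vecProj (maxEntVec d)) (x i, x i) (y i, y i))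
        = ∑ x : Fin (n-1) → Fin d, ∏ i,
            ∑ t, (if i = i₀ then isoState d p else vecProj (maxEntVec d)) (x i, x i) (t, t) := by
          exact Finset.sum_congr rfl fun x _ => sum_prod_pi
            (fun i t => (if i = i₀ then isoState d p else vecProj (maxEntVec d)) (x i, x i) (t, t))
      _ = _ := sum_prod_pi
            (fun i s => ∑ t, (if i = i₀ then isoState d p else vecProj (maxEntVec d)) (s, s) (t, t))
  rw [hdouble]
  have hprod : (∏ i, ∑ s, ∑ t,
        (if i = i₀ then isoState d p else vecProj (maxEntVec d)) (s, s) (t, t))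
      = ((p : ℂ) * d + ((((1 - p) / (d ^ 2 : ℝ)) : ℝ) : ℂ) * d) * (d : ℂ) ^ (n - 2) := by
    rw [← Finset.mul_prod_erase Finset.univ _ (Finset.mem_univ i₀)]
    congr 1
    · simp only [if_pos rfl]
      exact edge_sum_iso d hd1 p
    · have hcongr : ∀ i ∈ Finset.univ.erase i₀, (∑ s, ∑ t,
          (if i = i₀ then isoState d p else vecProj (maxEntVec d)) (s, s) (t, t)) = (d : ℂ) := by
        intro i hi
        simp only [if_neg (Finset.ne_of_mem_erase hi)]
        exact edge_sum_max d hd1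
      rw [Finset.prod_congr rfl hcongr, Finset.prod_const, Finset.card_erase_of_mem
        (Finset.mem_univ i₀), Finset.card_univ, Fintype.card_fin,
        show n - 1 - 1 = n - 2 from by omega]
  rw [hprod]
  -- now pure arithmetic with casts
  have hd0 : (d : ℝ) ≠ 0 := by positivity
  obtain ⟨k, hk1, hk2⟩ : ∃ k, n - 1 = k + 1 ∧ n - 2 = k := ⟨n - 2, by omega, rfl⟩
  rw [hk1, hk2, hc]
  have hreal : ((Real.sqrt d)⁻¹) ^ (k+1) * (((Real.sqrt d)⁻¹) ^ (k+1) *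
        ((p * d + (1 - p) / (d:ℝ) ^ 2 * d) * (d:ℝ) ^ k)) = p + (1 - p) / (d:ℝ) ^ 2 := by
    have key : (Real.sqrt d)⁻¹ * (Real.sqrt d)⁻¹ = (d : ℝ)⁻¹ := inv_sqrt_sq d hd1
    have cancel : ((d:ℝ)⁻¹) ^ k * (d:ℝ) ^ k = 1 := by
      rw [← mul_pow, inv_mul_cancel₀ hd0, one_pow]
    calc ((Real.sqrt d)⁻¹) ^ (k+1) * (((Real.sqrt d)⁻¹) ^ (k+1) *
          ((p * d + (1 - p) / (d:ℝ) ^ 2 * d) * (d:ℝ) ^ k))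
        = ((Real.sqrt d)⁻¹ * (Real.sqrt d)⁻¹) ^ (k+1) *
          ((d:ℝ) ^ k * (p * d + (1 - p) / (d:ℝ) ^ 2 * d)) := by ring
      _ = ((d:ℝ)⁻¹) ^ (k+1) * ((d:ℝ) ^ k * (p * d + (1 - p) / (d:ℝ) ^ 2 * d)) := by rw [key]
      _ = (((d:ℝ)⁻¹) ^ k * (d:ℝ) ^ k) * ((d:ℝ)⁻¹ * (p * d + (1 - p) / (d:ℝ) ^ 2 * d)) := by
          rw [pow_succ]; ring
      _ = (d:ℝ)⁻¹ * (p * d + (1 - p) / (d:ℝ) ^ 2 * d) := by rw [cancel, one_mul]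
      _ = p + (1 - p) / (d:ℝ) ^ 2 := by field_simp
  rw [← hreal]
  push_cast
  ring

end StarGME
namespace StarGME

/-- Core Cauchy–Schwarz estimate in the "Alice record" world. -/
lemma core_cs {m d : ℕ} (hd : 0 < d) (S' : Finset (Fin m))
    (α β : (Fin m → Fin d) → ℂ)
    (hα : ∀ g g' : Fin m → Fin d, (∀ i ∈ S', g i = g' i) → α g = α g') :
    Complex.normSq (∑ g : Fin m → Fin d, α g * β g)
      ≤ (Fintype.card ((j : {i : Fin m // ¬ i ∈ S'}) → Fin d) : ℝ)
        * ((∑ t : (j : {i : Fin m // i ∈ S'}) → Fin d, Complex.normSq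
            (α (fun i => if h : i ∈ S' then t ⟨i, h⟩ else ⟨0, hd⟩)))
          * ∑ g : Fin m → Fin d, Complex.normSq (β g)) := by
  classical
  set E := Equiv.piEquivPiSubtypeProd (fun i : Fin m => i ∈ S') (fun _ => Fin d) with hE
  set ext : ((j : {i : Fin m // i ∈ S'}) → Fin d) → (Fin m → Fin d) :=
    fun t i => if h : i ∈ S' then t ⟨i, h⟩ else ⟨0, hd⟩ with hext
  have hαval : ∀ t s, α (E.symm (t, s)) = α (ext t) := by
    intro t s
    refine hα _ _ fun i h => ?_
    simp [hE, hext, Equiv.piEquivPiSubtypeProd_symm_apply, dif_pos h]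
  have hsum : (∑ g : Fin m → Fin d, α g * β g)
      = ∑ t, α (ext t) * (∑ s, β (E.symm (t, s))) := by
    rw [← Equiv.sum_comp E.symm (fun g => α g * β g), Fintype.sum_prod_type]
    exact Finset.sum_congr rfl fun t _ => by
      rw [Finset.mul_sum]
      exact Finset.sum_congr rfl fun s _ => by rw [hαval]
  rw [hsum]
  have habs : Complex.normSq (∑ t, α (ext t) * (∑ s, β (E.symm (t, s))))
      ≤ (∑ t, ‖α (ext t)‖ * ‖∑ s, β (E.symm (t, s))‖) ^ 2 := by
    rw [← Complex.sq_norm]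
    refine pow_le_pow_left₀ (norm_nonneg _) ?_ 2
    refine le_trans (norm_sum_le _ _) (le_of_eq ?_)
    exact Finset.sum_congr rfl fun t _ => norm_mul _ _
  refine le_trans habs ?_
  refine le_trans (Finset.sum_mul_sq_le_sq_mul_sq Finset.univ
    (fun t => ‖α (ext t)‖)
    (fun t => ‖∑ s, β (E.symm (t, s))‖)) ?_
  have hC : ∀ t, (‖∑ s, β (E.symm (t, s))‖) ^ 2
      ≤ (Fintype.card ((j : {i : Fin m // ¬ i ∈ S'}) → Fin d) : ℝ)
        * ∑ s, Complex.normSq (β (E.symm (t, s))) := by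
    intro t
    have h1 : ‖∑ s, β (E.symm (t, s))‖ ≤ ∑ s, ‖β (E.symm (t, s))‖ :=
      norm_sum_le _ _
    have h2 : (∑ s, ‖β (E.symm (t, s))‖) ^ 2
        ≤ (Fintype.card ((j : {i : Fin m // ¬ i ∈ S'}) → Fin d) : ℝ)
          * ∑ s, (‖β (E.symm (t, s))‖) ^ 2 := by
      have := sq_sum_le_card_mul_sum_sq (s := (Finset.univ : Finset ((j : {i : Fin m // ¬ i ∈ S'}) → Fin d)))
        (f := fun s => ‖β (E.symm (t, s))‖)
      simpa [Finset.card_univ] using this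
    calc (‖∑ s, β (E.symm (t, s))‖) ^ 2
        ≤ (∑ s, ‖β (E.symm (t, s))‖) ^ 2 :=
          pow_le_pow_left₀ (norm_nonneg _) h1 2
      _ ≤ _ := by
          refine le_trans h2 (le_of_eq ?_)
          congr 1
          exact Finset.sum_congr rfl fun s _ => Complex.sq_norm _
  calc (∑ t, (‖α (ext t)‖) ^ 2)
        * ∑ t, (‖∑ s, β (E.symm (t, s))‖) ^ 2
      ≤ (∑ t, Complex.normSq (α (ext t)))
        * ∑ t, ((Fintype.card ((j : {i : Fin m // ¬ i ∈ S'}) → Fin d) : ℝ)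
            * ∑ s, Complex.normSq (β (E.symm (t, s)))) := by
        refine mul_le_mul (le_of_eq (Finset.sum_congr rfl fun t _ => Complex.sq_norm _))
          (Finset.sum_le_sum fun t _ => hC t)
          (Finset.sum_nonneg fun t _ => sq_nonneg _)
          (Finset.sum_nonneg fun t _ => Complex.normSq_nonneg _)
    _ = (Fintype.card ((j : {i : Fin m // ¬ i ∈ S'}) → Fin d) : ℝ)
        * ((∑ t, Complex.normSq (α (ext t))) * ∑ g, Complex.normSq (β g)) := by
        rw [← Finset.mul_sum]
        have : (∑ t, ∑ s, Complex.normSq (β (E.symm (t, s))))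
            = ∑ g, Complex.normSq (β g) := by
          calc (∑ t, ∑ s, Complex.normSq (β (E.symm (t, s))))
              = ∑ z : (({ x // x ∈ S' } → Fin d) × ({ x // x ∉ S' } → Fin d)),
                  Complex.normSq (β (E.symm z)) :=
                (Fintype.sum_prod_type (f := fun z => Complex.normSq (β (E.symm z)))).symm
            _ = ∑ g, Complex.normSq (β g) := Equiv.sum_comp E.symm (fun g => Complex.normSq (β g))
        rw [this]
        ring

end StarGME
namespace StarGME

lemma pow_cancel_aux (dR : ℝ) (hdne : dR ≠ 0) (m k : ℕ) (hk : k ≤ m) :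
    (dR⁻¹) ^ m * (dR ^ (m - k) * 1) = (dR⁻¹) ^ k := by
  obtain ⟨j, hj1, hj2⟩ : ∃ j, m = j + k ∧ m - k = j := ⟨m - k, by omega, rfl⟩
  rw [hj2, hj1, mul_one]
  calc (dR⁻¹) ^ (j + k) * dR ^ j
      = ((dR⁻¹) ^ j * dR ^ j) * (dR⁻¹) ^ k := by rw [pow_add]; ring
    _ = (dR⁻¹) ^ k := by
        rw [← mul_pow, inv_mul_cancel₀ hdne, one_pow, one_mul]

lemma bisep_wlog {ι : Type*} [Fintype ι] {Idx : ι → Type*} (v : (∀ i, Idx i) → ℂ)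
    (hb : IsBisepVec v) (i₀ : ι) :
    ∃ M : Finset ι, M.Nonempty ∧ i₀ ∉ M ∧
      ∃ (a : ((j : {j : ι // j ∈ M}) → Idx j.1) → ℂ)
        (b : ((j : {j : ι // j ∉ M}) → Idx j.1) → ℂ),
        ∀ f, v f = a (fun j => f j.1) * b (fun j => f j.1) := by
  classical
  obtain ⟨M, hne, hnuniv, a, b, hab⟩ := hb
  by_cases h : i₀ ∈ M
  · have hcne : Mᶜ.Nonempty := by
      rw [← Finset.card_pos, Finset.card_compl]
      have := Finset.card_lt_card (lt_of_le_of_ne (Finset.subset_univ M) hnuniv)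
      rw [Finset.card_univ] at this
      omega
    refine ⟨Mᶜ, hcne, by simp [h],
      fun y => b (fun j => y ⟨j.1, Finset.mem_compl.mpr j.2⟩),
      fun z => a (fun j => z ⟨j.1, by simp [Finset.mem_compl, j.2]⟩),
      fun f => (hab f).trans (mul_comm _ _)⟩
  · exact ⟨M, hne, h, a, b, hab⟩

/-- The gluing map used to compare product amplitudes with the full state. -/
def glue (n d : ℕ) (S' : Finset (Fin (n - 1)))
    (z : ({i : Fin (n - 1) // i ∈ S'} → Fin d) × (Fin (n - 1) → Fin d)) :
    ∀ o, StarIdx n d o :=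
  fun o => match o with
  | none => z.2
  | some i => if h : i ∈ S' then z.1 ⟨i, h⟩ else z.2 i

lemma glue_injective (n d : ℕ) (S' : Finset (Fin (n - 1))) :
    Function.Injective (glue n d S') := by
  intro z z' h
  have h2 : z.2 = z'.2 := congrFun h none
  have h1 : z.1 = z'.1 := by
    funext j
    obtain ⟨i, hi⟩ := j
    have := congrFun h (some i)
    change (if h : i ∈ S' then z.1 ⟨i, h⟩ else z.2 i) = (if h : i ∈ S' then z'.1 ⟨i, h⟩ else z'.2 i) at this
    rw [dif_pos hi, dif_pos hi] at this
    exact this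
  exact Prod.ext h1 h2

set_option maxHeartbeats 1000000 in
lemma bisep_overlap (n d : ℕ) (hn : 3 ≤ n) (hd : 2 ≤ d)
    (u : (∀ o, StarIdx n d o) → ℂ) (hu : UnitVec u) (hb : IsBisepVec u) :
    Complex.normSq (∑ f, star (Phi n d f) * u f) ≤ 1 / d := by
  classical
  have hd1 : 1 ≤ d := by omega
  have hd0 : (0:ℕ) < d := by omega
  have hdR : (0:ℝ) < d := by positivity
  obtain ⟨M, hMne, hnone, a, b, hab⟩ := bisep_wlog u hb none
  set S' : Finset (Fin (n-1)) := Finset.univ.filter (fun i => some i ∈ M) with hS'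
  have hmemS' : ∀ i : Fin (n-1), i ∈ S' ↔ some i ∈ M := by
    intro i; simp [hS']
  have hS'ne : S'.Nonempty := by
    obtain ⟨j, hj⟩ := hMne
    cases j with
    | none => exact absurd hj hnone
    | some i => exact ⟨i, (hmemS' i).mpr hj⟩
  set α : (Fin (n-1) → Fin d) → ℂ := fun g => a (fun j => embed n d g j.1) with hα
  set β : (Fin (n-1) → Fin d) → ℂ := fun g => b (fun j => embed n d g j.1) with hβ
  -- overlap reindexed
  have h1 : ∑ f, star (Phi n d f) * u f
      = (((Real.sqrt d)⁻¹ : ℝ) : ℂ) ^ (n-1) * ∑ g, α g * β g := by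
    simp only [star_phi]
    rw [sum_phi_mul n d u]
    congr 1
    exact Finset.sum_congr rfl fun g _ => hab (embed n d g)
  -- α depends only on S' coordinates
  have hαdep : ∀ g g' : Fin (n-1) → Fin d, (∀ i ∈ S', g i = g' i) → α g = α g' := by
    intro g g' hgg
    refine congrArg a (funext fun j => ?_)
    obtain ⟨o, ho⟩ := j
    cases o with
    | none => exact absurd ho hnone
    | some i => exact hgg i ((hmemS' i).mpr ho)
  have hcore := core_cs hd0 S' α β hαdep
  -- the product of squared norms is at most 1
  have hprod1 : (∑ t : {i : Fin (n-1) // i ∈ S'} → Fin d, Complex.normSq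
        (α (fun i => if h : i ∈ S' then t ⟨i, h⟩ else ⟨0, hd0⟩)))
      * (∑ g : Fin (n-1) → Fin d, Complex.normSq (β g)) ≤ 1 := by
    have hval : ∀ (t : {i : Fin (n-1) // i ∈ S'} → Fin d) (g : Fin (n-1) → Fin d),
        Complex.normSq (α (fun i => if h : i ∈ S' then t ⟨i, h⟩ else ⟨0, hd0⟩))
          * Complex.normSq (β g) = Complex.normSq (u (glue n d S' (t, g))) := by
      intro t g
      rw [← Complex.normSq_mul]
      congr 1
      rw [hab (glue n d S' (t, g))]
      congr 1
      · refine congrArg a (funext fun j => ?_)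
        obtain ⟨o, ho⟩ := j
        cases o with
        | none => exact absurd ho hnone
        | some i =>
            have hi : i ∈ S' := (hmemS' i).mpr ho
            show (if h : i ∈ S' then t ⟨i, h⟩ else ⟨0, hd0⟩) = glue n d S' (t, g) (some i)
            rw [dif_pos hi]
            show t ⟨i, hi⟩ = (if h : i ∈ S' then t ⟨i, h⟩ else g i)
            rw [dif_pos hi]
      · refine congrArg b (funext fun j => ?_)
        obtain ⟨o, ho⟩ := j
        cases o with
        | none => rfl
        | some i =>
            have hi : ¬ i ∈ S' := fun h => ho ((hmemS' i).mp h)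
            show embed n d g (some i) = glue n d S' (t, g) (some i)
            show g i = (if h : i ∈ S' then t ⟨i, h⟩ else g i)
            rw [dif_neg hi]
    have hunit : ∑ f, Complex.normSq (u f) = 1 := by
      have hz : ∀ z : ℂ, star z * z = ((Complex.normSq z : ℝ) : ℂ) := by
        intro z
        rw [RCLike.star_def, mul_comm]
        exact Complex.mul_conj z
      have := hu
      unfold UnitVec at this
      simp only [hz] at this
      rw [← Complex.ofReal_sum] at this
      exact_mod_cast this
    calc (∑ t : {i : Fin (n-1) // i ∈ S'} → Fin d, Complex.normSq
          (α (fun i => if h : i ∈ S' then t ⟨i, h⟩ else ⟨0, hd0⟩)))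
        * (∑ g : Fin (n-1) → Fin d, Complex.normSq (β g))
        = ∑ z : ({i : Fin (n-1) // i ∈ S'} → Fin d) × (Fin (n-1) → Fin d),
            Complex.normSq (u (glue n d S' z)) := by
          rw [Finset.sum_mul_sum, Fintype.sum_prod_type]
          exact Finset.sum_congr rfl fun t _ => Finset.sum_congr rfl fun g _ => hval t g
      _ = ∑ f ∈ Finset.univ.image (glue n d S'), Complex.normSq (u f) := by
          rw [Finset.sum_image (fun x _ y _ hxy => glue_injective n d S' hxy)]
      _ ≤ ∑ f, Complex.normSq (u f) :=
          Finset.sum_le_sum_of_subset_of_nonneg (Finset.subset_univ _)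
            (fun f _ _ => Complex.normSq_nonneg _)
      _ = 1 := hunit
  -- cardinality of the complement function type
  have hcard : (Fintype.card ({i : Fin (n-1) // ¬ i ∈ S'} → Fin d) : ℝ)
      = (d : ℝ) ^ (n - 1 - S'.card) := by
    have : Fintype.card ({i : Fin (n-1) // ¬ i ∈ S'} → Fin d) = d ^ (n - 1 - S'.card) := by
      rw [Fintype.card_fun, Fintype.card_fin, Fintype.card_subtype_compl, Fintype.card_coe,
        Fintype.card_fin]
    rw [this]
    push_cast
    ring
  -- put everything together
  have hdne : (d : ℝ) ≠ 0 := ne_of_gt hdR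
  have hk1 : 1 ≤ S'.card := Finset.card_pos.mpr hS'ne
  have hkm : S'.card ≤ n - 1 := by
    have h := Finset.card_le_card (Finset.subset_univ S')
    simpa using h
  have hc : Complex.normSq ((((Real.sqrt d)⁻¹ : ℝ) : ℂ) ^ (n-1)) = ((d:ℝ)⁻¹) ^ (n-1) := by
    rw [map_pow, Complex.normSq_ofReal, inv_sqrt_sq d hd1]
  have harith : ((d:ℝ)⁻¹) ^ (n-1) * ((d:ℝ) ^ (n - 1 - S'.card) * 1) = ((d:ℝ)⁻¹) ^ S'.card :=
    pow_cancel_aux (d:ℝ) hdne (n-1) S'.card hkm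
  have hfinal : ((d:ℝ)⁻¹) ^ S'.card ≤ 1 / d := by
    rw [one_div]
    have h11 : (1:ℝ) ≤ d := by exact_mod_cast hd1
    calc ((d:ℝ)⁻¹) ^ S'.card ≤ ((d:ℝ)⁻¹) ^ 1 :=
          pow_le_pow_of_le_one (by positivity) (inv_le_one_of_one_le₀ h11) hk1
      _ = (d:ℝ)⁻¹ := pow_one _
  rw [h1, Complex.normSq_mul, hc]
  calc ((d:ℝ)⁻¹) ^ (n-1) * Complex.normSq (∑ g, α g * β g)
      ≤ ((d:ℝ)⁻¹) ^ (n-1) * ((d : ℝ) ^ (n - 1 - S'.card)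
          * ((∑ t : {i : Fin (n-1) // i ∈ S'} → Fin d, Complex.normSq
              (α (fun i => if h : i ∈ S' then t ⟨i, h⟩ else ⟨0, hd0⟩)))
            * ∑ g : Fin (n-1) → Fin d, Complex.normSq (β g))) := by
        refine mul_le_mul_of_nonneg_left ?_ (by positivity)
        rw [← hcard]
        exact hcore
    _ ≤ ((d:ℝ)⁻¹) ^ (n-1) * ((d : ℝ) ^ (n - 1 - S'.card) * 1) := by
        refine mul_le_mul_of_nonneg_left (mul_le_mul_of_nonneg_left hprod1 (by positivity))
          (by positivity)
    _ = ((d:ℝ)⁻¹) ^ S'.card := harith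
    _ ≤ 1 / d := hfinal

end StarGME
namespace StarGME

set_option maxHeartbeats 1000000 in
lemma expand_bisep (n d : ℕ) (m' : ℕ) (w : Fin m' → ℝ)
    (uu : Fin m' → (∀ o, StarIdx n d o) → ℂ) :
    ∑ f, ∑ g, star (Phi n d f) *
        ((∑ k, (w k : ℂ) • vecProj (uu k)) f g * Phi n d g)
      = ∑ k, (w k : ℂ) *
          ((Complex.normSq (∑ f, star (Phi n d f) * uu k f) : ℝ) : ℂ) := by
  have hentry : ∀ f g, (∑ k, (w k : ℂ) • vecProj (uu k)) f g
      = ∑ k, (w k : ℂ) * (uu k f * star (uu k g)) := by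
    intro f g
    simp [Matrix.sum_apply, vecProj, Matrix.smul_apply, smul_eq_mul]
  calc ∑ f, ∑ g, star (Phi n d f) * ((∑ k, (w k : ℂ) • vecProj (uu k)) f g * Phi n d g)
      = ∑ f, ∑ g, ∑ k, (w k : ℂ) *
          ((star (Phi n d f) * uu k f) * (star (uu k g) * Phi n d g)) := by
        refine Finset.sum_congr rfl fun f _ => Finset.sum_congr rfl fun g _ => ?_
        rw [hentry, Finset.sum_mul, Finset.mul_sum]
        exact Finset.sum_congr rfl fun k _ => by ring
    _ = ∑ k, ∑ f, ∑ g, (w k : ℂ) *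
          ((star (Phi n d f) * uu k f) * (star (uu k g) * Phi n d g)) := by
        exact Eq.trans (Finset.sum_congr rfl fun f _ => Finset.sum_comm) Finset.sum_comm
    _ = ∑ k, (w k : ℂ) *
          ((∑ f, star (Phi n d f) * uu k f) * (∑ g, star (uu k g) * Phi n d g)) := by
        refine Finset.sum_congr rfl fun k _ => ?_
        rw [Finset.sum_mul_sum, Finset.mul_sum]
        exact Finset.sum_congr rfl fun f _ => by rw [Finset.mul_sum]
    _ = _ := by
        refine Finset.sum_congr rfl fun k _ => ?_
        congr 1
        have hstar : (∑ g, star (uu k g) * Phi n d g)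
            = star (∑ f, star (Phi n d f) * uu k f) := by
          rw [star_sum]
          exact Finset.sum_congr rfl fun f _ => by rw [StarMul.star_mul, star_star]
        rw [hstar, RCLike.star_def]
        exact Complex.mul_conj _

end StarGME

set_option maxHeartbeats 1000000 in
theorem star_network_one_isotropic_edge_GME (n d : ℕ) (hn : 3 ≤ n) (hd : 2 ≤ d)
    (p : ℝ) (hp0 : 0 ≤ p) (hp1 : p ≤ 1) (hp : 1 / (d + 1 : ℝ) < p) :
    ¬ BisepState (StarIdx n d) (starNet n d p ⟨0, by omega⟩) := by
  intro hbisep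
  obtain ⟨m', w, uu, hw0, hw1, huk, hρ⟩ := hbisep
  have hd1 : 1 ≤ d := by omega
  have hW2 := congrArg (fun ρ : Matrix (∀ o, StarIdx n d o) (∀ o, StarIdx n d o) ℂ =>
    ∑ f, ∑ g, star (StarGME.Phi n d f) * (ρ f g * StarGME.Phi n d g)) hρ
  rw [StarGME.witness_value n d hn hd p _] at hW2
  rw [StarGME.expand_bisep n d m' w uu] at hW2
  -- convert to a real equation
  have hreal : (p + (1 - p) / d ^ 2 : ℝ)
      = ∑ k, w k * Complex.normSq (∑ f, star (StarGME.Phi n d f) * uu k f) := by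
    have : ((∑ k, w k * Complex.normSq (∑ f, star (StarGME.Phi n d f) * uu k f) : ℝ) : ℂ)
        = ∑ k, (w k : ℂ) * ((Complex.normSq (∑ f, star (StarGME.Phi n d f) * uu k f) : ℝ) : ℂ) := by
      push_cast
      rfl
    apply Complex.ofReal_injective
    rw [this, hW2]
  -- bound from biseparability
  have hbound : ∑ k, w k * Complex.normSq (∑ f, star (StarGME.Phi n d f) * uu k f)
      ≤ 1 / d := by
    calc ∑ k, w k * Complex.normSq (∑ f, star (StarGME.Phi n d f) * uu k f)
        ≤ ∑ k, w k * (1 / d) := by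
          refine Finset.sum_le_sum fun k _ => ?_
          exact mul_le_mul_of_nonneg_left
            (StarGME.bisep_overlap n d hn hd (uu k) (huk k).1 (huk k).2) (hw0 k)
      _ = 1 / d := by rw [← Finset.sum_mul, hw1, one_mul]
  -- arithmetic contradiction
  have hD0 : (0:ℝ) < d := by positivity
  have hD2 : (2:ℝ) ≤ d := by exact_mod_cast hd
  have h1 : 1 < p * ((d:ℝ) + 1) := by
    rw [div_lt_iff₀ (by linarith)] at hp
    linarith
  have hgt : 1 / (d:ℝ) < p + (1 - p) / d ^ 2 := by
    have hsub : p + (1 - p) / (d:ℝ) ^ 2 - 1 / d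
        = (((d:ℝ) - 1) * (p * ((d:ℝ) + 1) - 1)) / (d:ℝ) ^ 2 := by
      field_simp
      ring
    have hpos : 0 < (((d:ℝ) - 1) * (p * ((d:ℝ) + 1) - 1)) / (d:ℝ) ^ 2 := by
      apply div_pos
      · apply mul_pos <;> linarith
      · positivity
    linarith [hsub ▸ hpos]
  rw [hreal] at hgt
  linarith
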